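/- Let m ≥ 1 and define f(s) = (Σ_{k=0}^{m-1} C(2m,k) s^k)/(1+s)^{2m} as a formal power series in s. Then f(0) = 1, the coefficients of s¹ through s^{m-1} in the power-series expansion of f all vanish, and the coefficient of s^m is -C(2m,m). -/

import Mathlib

set_option synthInstance.maxHeartbeats 400000

open PowerSeries Finset

/-- `f = (Σ_{k<m} C(2m,k) s^k) · (1+s)^{-2m}` as a formal power series over ℝ. -/
noncomputable def f7 (m : ℕ) : PowerSeries ℝ :=
  (∑ k ∈ Finset.range m, (Nat.choose (2 * m) k : PowerSeries ℝ) * (PowerSeries.X : PowerSeries ℝ) ^ k) *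
    ((1 + (PowerSeries.X : PowerSeries ℝ)) ^ (2 * m))⁻¹

lemma expand_pow (n : ℕ) :
    ((1 : PowerSeries ℝ) + X) ^ n =
      ∑ k ∈ Finset.range (n + 1), (Nat.choose n k : PowerSeries ℝ) * X ^ k := by
  rw [add_comm, add_pow]
  apply Finset.sum_congr rfl
  intro k hk
  ring

lemma f7_eq (m : ℕ) :
    f7 m = 1 - ((∑ k ∈ Finset.range (m + 1),
        (Nat.choose (2 * m) (m + k) : PowerSeries ℝ) * X ^ k) *
        ((1 + (X : PowerSeries ℝ)) ^ (2 * m))⁻¹) * X ^ m := by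
  have hc : constantCoeff ((1 + (X : PowerSeries ℝ)) ^ (2 * m)) ≠ 0 := by
    simp
  have hinv : ((1 + (X : PowerSeries ℝ)) ^ (2 * m)) *
      ((1 + (X : PowerSeries ℝ)) ^ (2 * m))⁻¹ = 1 :=
    PowerSeries.mul_inv_cancel _ hc
  have hsplit : ∑ k ∈ Finset.range (2 * m + 1),
      (Nat.choose (2 * m) k : PowerSeries ℝ) * X ^ k
      = (∑ k ∈ Finset.range m, (Nat.choose (2 * m) k : PowerSeries ℝ) * X ^ k)
        + (∑ k ∈ Finset.range (m + 1),
            (Nat.choose (2 * m) (m + k) : PowerSeries ℝ) * X ^ k) * X ^ m := by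
    have hIco := Finset.sum_Ico_eq_sum_range
      (f := fun i => ((Nat.choose (2 * m) i : PowerSeries ℝ) * X ^ i)) (m := m) (n := 2 * m + 1)
    rw [Finset.range_eq_Ico, ← Finset.sum_Ico_consecutive _ (Nat.zero_le m) (by omega),
      ← Finset.range_eq_Ico]
    congr 1
    rw [hIco]
    have h2 : 2 * m + 1 - m = m + 1 := by omega
    rw [h2, Finset.sum_mul]
    apply Finset.sum_congr rfl
    intro k hk
    rw [pow_add]
    ring
  have hP : (∑ k ∈ Finset.range m, (Nat.choose (2 * m) k : PowerSeries ℝ) * X ^ k)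
      = ((1 + (X : PowerSeries ℝ)) ^ (2 * m))
        - (∑ k ∈ Finset.range (m + 1),
            (Nat.choose (2 * m) (m + k) : PowerSeries ℝ) * X ^ k) * X ^ m := by
    rw [expand_pow, hsplit]; ring
  rw [f7, hP, sub_mul, hinv]
  ring

theorem maclaurin_NX (m : ℕ) (hm : 1 ≤ m) :
    PowerSeries.coeff 0 (f7 m) = 1 ∧
    (∀ k : ℕ, 1 ≤ k → k ≤ m - 1 → PowerSeries.coeff k (f7 m) = 0) ∧
    PowerSeries.coeff m (f7 m) = -(Nat.choose (2 * m) m : ℝ) := by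
  have hcoeff : ∀ n : ℕ, PowerSeries.coeff n (f7 m)
      = (if n = 0 then 1 else 0)
        - (if m ≤ n then PowerSeries.coeff (n - m)
            ((∑ k ∈ Finset.range (m + 1),
              (Nat.choose (2 * m) (m + k) : PowerSeries ℝ) * X ^ k) *
              ((1 + (X : PowerSeries ℝ)) ^ (2 * m))⁻¹) else 0) := by
    intro n
    rw [f7_eq, map_sub, PowerSeries.coeff_one, PowerSeries.coeff_mul_X_pow']
  refine ⟨?_, ?_, ?_⟩
  · rw [hcoeff]
    simp [Nat.not_le.mpr (by omega : 0 < m)]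
  · intro k hk1 hk2
    rw [hcoeff]
    have : ¬ m ≤ k := by omega
    have hk0 : ¬ k = 0 := by omega
    simp [this, hk0]
  · rw [hcoeff]
    rw [if_pos le_rfl, if_neg (by omega : ¬ m = 0), Nat.sub_self, zero_sub, neg_inj]
    rw [PowerSeries.coeff_zero_eq_constantCoeff, map_mul]
    rw [PowerSeries.constantCoeff_inv]
    simp only [map_sum, map_mul, map_pow, PowerSeries.constantCoeff_X]
    rw [Finset.sum_eq_single 0 (by intro b _ hb; simp [zero_pow hb]) (by simp)]
    simp
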